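/- For all x > 0, 1 − √π·x·H(x) ≤ min{ 1/(2x²), 1/(√π·x) }, where H(x) = e^{x²}·erfc(x) is the Mill's ratio. -/

import Mathlib

open Real MeasureTheory Set Filter

/-- The complementary error function. -/
noncomputable def erfc (z : ℝ) : ℝ :=
  (2 / Real.sqrt π) * ∫ r in Set.Ioi z, Real.exp (-r ^ 2)

/-- The Mill's ratio. -/
noncomputable def MillsRatio (x : ℝ) : ℝ := Real.exp (x ^ 2) * erfc x

lemma gauss_integrableOn (x : ℝ) :
    IntegrableOn (fun r : ℝ => Real.exp (-r ^ 2)) (Set.Ioi x) := by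
  have h : (fun r : ℝ => Real.exp (-r ^ 2)) = fun r : ℝ => Real.exp (-1 * r ^ 2) := by
    funext r; ring_nf
  rw [h]
  exact (integrable_exp_neg_mul_sq one_pos).integrableOn

/-- Key asymptotic lower bound. -/
lemma gauss_int_lower (x : ℝ) (hx : 0 < x) :
    Real.exp (-x ^ 2) * (2 * x ^ 2 - 1) / (4 * x ^ 3) ≤
      ∫ r in Set.Ioi x, Real.exp (-r ^ 2) := by
  set f : ℝ → ℝ := fun r => -(Real.exp (-r ^ 2) * ((2 * r ^ 2 - 1) / (4 * r ^ 3))) with hf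
  set f' : ℝ → ℝ := fun r => Real.exp (-r ^ 2) * (1 - 3 / (4 * r ^ 4)) with hf'
  have hderiv : ∀ r ∈ Set.Ici x, HasDerivAt f (f' r) r := by
    intro r hr
    have hr0 : 0 < r := lt_of_lt_of_le hx hr
    have h1 : HasDerivAt (fun r : ℝ => Real.exp (-r ^ 2)) (Real.exp (-r ^ 2) * (-2 * r)) r := by
      have := ((hasDerivAt_pow 2 r).neg).exp
      simpa [mul_comm] using this
    have h2 : HasDerivAt (fun r : ℝ => (2 * r ^ 2 - 1) / (4 * r ^ 3))
        ((4 * r * (4 * r ^ 3) - (2 * r ^ 2 - 1) * (12 * r ^ 2)) / (4 * r ^ 3) ^ 2) r := by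
      have hnum : HasDerivAt (fun r : ℝ => 2 * r ^ 2 - 1) (4 * r) r := by
        have h := ((hasDerivAt_pow 2 r).const_mul (2:ℝ)).sub_const 1
        refine h.congr_deriv ?_
        simp; ring
      have hden : HasDerivAt (fun r : ℝ => 4 * r ^ 3) (12 * r ^ 2) r := by
        have h := (hasDerivAt_pow 3 r).const_mul (4:ℝ)
        refine h.congr_deriv ?_
        simp; ring
      exact hnum.div hden (by positivity)
    have h3 := (h1.mul h2).neg
    refine h3.congr_deriv ?_
    have h4 : r ^ 3 ≠ 0 := by positivity
    have h4' : r ^ 4 ≠ 0 := by positivity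
    simp only [hf']
    field_simp
    ring
  have htend : Tendsto f atTop (nhds 0) := by
    have h1 : Tendsto (fun r : ℝ => Real.exp (-r ^ 2)) atTop (nhds 0) := by
      apply Real.tendsto_exp_atBot.comp
      apply tendsto_neg_atBot_iff.mpr
      exact tendsto_pow_atTop (by norm_num)
    have h2 : Tendsto (fun r : ℝ => (2 * r ^ 2 - 1) / (4 * r ^ 3)) atTop (nhds 0) := by
      apply Filter.Tendsto.congr' (f₁ := fun r : ℝ => 1 / (2 * r) - 1 / (4 * r ^ 3))
      · filter_upwards [eventually_gt_atTop (0 : ℝ)] with r hr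
        field_simp
        ring
      · have ha : Tendsto (fun r : ℝ => 1 / (2 * r)) atTop (nhds 0) := by
          apply Tendsto.div_atTop tendsto_const_nhds
          exact (tendsto_id.const_mul_atTop two_pos)
        have hb : Tendsto (fun r : ℝ => 1 / (4 * r ^ 3)) atTop (nhds 0) := by
          apply Tendsto.div_atTop tendsto_const_nhds
          exact (tendsto_pow_atTop (by norm_num)).const_mul_atTop (by norm_num)
        simpa using ha.sub hb
    have := (h1.mul h2).neg
    simpa [hf, mul_div_assoc] using this
  have hf'int : IntegrableOn f' (Set.Ioi x) := by
    have hmeas : AEStronglyMeasurable f' (volume.restrict (Set.Ioi x)) := by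
      apply ContinuousOn.aestronglyMeasurable _ measurableSet_Ioi
      intro r hr
      have hr0 : 0 < r := lt_trans hx hr
      apply ContinuousWithinAt.mul
      · exact (Real.continuous_exp.comp (continuous_pow 2).neg).continuousWithinAt
      · apply ContinuousWithinAt.sub continuousWithinAt_const
        apply ContinuousWithinAt.div continuousWithinAt_const
        · exact (continuous_const.mul (continuous_pow 4)).continuousWithinAt
        · positivity
    apply Integrable.mono' (g := fun r => (1 + 3 / (4 * x ^ 4)) * Real.exp (-r ^ 2))
    · exact ((gauss_integrableOn x).const_mul _)
    · exact hmeas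
    · filter_upwards [ae_restrict_mem measurableSet_Ioi] with r hr
      have hr0 : x < r := hr
      have h1 : 0 < r := lt_trans hx hr0
      have h2 : 3 / (4 * r ^ 4) ≤ 3 / (4 * x ^ 4) := by
        apply div_le_div_of_nonneg_left (by norm_num) (by positivity)
        gcongr
      have h3 : (0:ℝ) < 3 / (4 * r ^ 4) := by positivity
      have habs : |1 - 3 / (4 * r ^ 4)| ≤ 1 + 3 / (4 * x ^ 4) := by
        rw [abs_le]; constructor <;> nlinarith
      calc ‖f' r‖ = Real.exp (-r ^ 2) * |1 - 3 / (4 * r ^ 4)| := by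
            rw [Real.norm_eq_abs, hf', abs_mul, abs_of_pos (Real.exp_pos _)]
        _ ≤ Real.exp (-r ^ 2) * (1 + 3 / (4 * x ^ 4)) := by
            exact mul_le_mul_of_nonneg_left habs (Real.exp_pos _).le
        _ = (1 + 3 / (4 * x ^ 4)) * Real.exp (-r ^ 2) := by ring
  have hint := integral_Ioi_of_hasDerivAt_of_tendsto' hderiv hf'int htend
  have hle : ∫ r in Set.Ioi x, f' r ≤ ∫ r in Set.Ioi x, Real.exp (-r ^ 2) := by
    apply setIntegral_mono_on hf'int (gauss_integrableOn x) measurableSet_Ioi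
    intro r hr
    have hr0 : 0 < r := lt_trans hx hr
    have h3 : (0:ℝ) < 3 / (4 * r ^ 4) := by positivity
    have := Real.exp_pos (-r ^ 2)
    simp only [hf']
    nlinarith
  rw [hint] at hle
  simp only [hf] at hle
  have : Real.exp (-x ^ 2) * ((2 * x ^ 2 - 1) / (4 * x ^ 3)) =
      Real.exp (-x ^ 2) * (2 * x ^ 2 - 1) / (4 * x ^ 3) := by ring
  linarith [hle]

lemma exp_neg_sq_upper (r : ℝ) : Real.exp (-r ^ 2) ≤ 1 - r ^ 2 + r ^ 4 / 2 := by
  have h1 : 1 + r ^ 2 + (r ^ 2) ^ 2 / 2 ≤ Real.exp (r ^ 2) :=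
    Real.quadratic_le_exp_of_nonneg (sq_nonneg r)
  have h2 : Real.exp (-r ^ 2) * Real.exp (r ^ 2) = 1 := by
    rw [← Real.exp_add]; simp
  have h3 := Real.exp_pos (-r ^ 2)
  have h4 : (0:ℝ) < 1 + r ^ 2 + (r ^ 2) ^ 2 / 2 := by positivity
  nlinarith [sq_nonneg (r ^ 4), sq_nonneg (1 - r ^ 2 + r ^ 4 / 2)]

/-- Lower bound for the tail for moderate x. -/
lemma gauss_int_lower_small (x : ℝ) (hx : 0 < x) :
    Real.sqrt π / 2 - (x - x ^ 3 / 3 + x ^ 5 / 10) ≤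
      ∫ r in Set.Ioi x, Real.exp (-r ^ 2) := by
  have hsplit : (∫ r in Set.Ioi (0:ℝ), Real.exp (-r ^ 2)) =
      (∫ r in Set.Ioc (0:ℝ) x, Real.exp (-r ^ 2)) + ∫ r in Set.Ioi x, Real.exp (-r ^ 2) := by
    rw [← Set.Ioc_union_Ioi_eq_Ioi hx.le]
    rw [setIntegral_union (Set.Ioc_disjoint_Ioi le_rfl) measurableSet_Ioi
      ((gauss_integrableOn 0).mono_set Set.Ioc_subset_Ioi_self) (gauss_integrableOn x)]
  have htot : (∫ r in Set.Ioi (0:ℝ), Real.exp (-r ^ 2)) = Real.sqrt π / 2 := by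
    have h : (fun r : ℝ => Real.exp (-r ^ 2)) = fun r : ℝ => Real.exp (-1 * r ^ 2) := by
      funext r; ring_nf
    rw [h, integral_gaussian_Ioi]
    norm_num
  have hIoc : (∫ r in Set.Ioc (0:ℝ) x, Real.exp (-r ^ 2)) ≤ x - x ^ 3 / 3 + x ^ 5 / 10 := by
    rw [← intervalIntegral.integral_of_le hx.le]
    have hle : ∫ r in (0:ℝ)..x, Real.exp (-r ^ 2) ≤ ∫ r in (0:ℝ)..x, (1 - r ^ 2 + r ^ 4 / 2) := by
      apply intervalIntegral.integral_mono_on hx.le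
      · apply Continuous.intervalIntegrable; continuity
      · apply Continuous.intervalIntegrable; continuity
      · intro r _; exact exp_neg_sq_upper r
    have heval : ∫ r in (0:ℝ)..x, (1 - r ^ 2 + r ^ 4 / 2) = x - x ^ 3 / 3 + x ^ 5 / 10 := by
      have h2 : IntervalIntegrable (fun r : ℝ => r ^ 2) volume 0 x := by
        apply Continuous.intervalIntegrable; continuity
      have h4 : IntervalIntegrable (fun r : ℝ => r ^ 4 / 2) volume 0 x := by
        apply Continuous.intervalIntegrable; continuity
      rw [intervalIntegral.integral_add (by apply Continuous.intervalIntegrable; continuity) h4,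
        intervalIntegral.integral_sub (by apply Continuous.intervalIntegrable; continuity) h2]
      simp [intervalIntegral.integral_div, _root_.integral_pow]
      norm_num
      ring
    linarith
  linarith

lemma sqrt_pi_bounds : 1.7724 < Real.sqrt π ∧ Real.sqrt π < 1.7725 := by
  have h1 : π < 3.1416 := by linarith [Real.pi_lt_d6]
  have h2 : 3.1415 < π := by linarith [Real.pi_gt_d6]
  have hs : Real.sqrt π ^ 2 = π := Real.sq_sqrt Real.pi_pos.le
  have hpos : 0 < Real.sqrt π := Real.sqrt_pos.mpr Real.pi_pos
  constructor <;> nlinarith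

lemma aux_key (x s : ℝ) (hx : 0 < x) (hc : x < 9/10) (hs1 : 1.7724 < s) (hs2 : s < 1.7725) :
    (1 - 2 * x * (1 + x ^ 2) * (s / 2 - (x - x ^ 3 / 3 + x ^ 5 / 10))) * (s * x) ≤ 1 := by
  have ha : (0:ℝ) ≤ 9/10 - x := by linarith
  have hq : (0:ℝ) ≤ x - x ^ 3 / 3 + x ^ 5 / 10 := by nlinarith [pow_pos hx 5, sq_nonneg x]
  have hG : (0:ℝ) ≤ 1 - 1.7725*x + 3.14140176*(x^2*(1+x^2)) - 3.545*(x^2*(1+x^2)*(x - x^3/3 + x^5/10)) := by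
    nlinarith [mul_nonneg ha hx.le, mul_nonneg (mul_nonneg ha hx.le) hx.le,
      mul_nonneg ha (pow_pos hx 3).le, mul_nonneg ha (pow_pos hx 4).le,
      mul_nonneg ha (pow_pos hx 5).le, mul_nonneg ha (pow_pos hx 6).le,
      mul_nonneg ha (pow_pos hx 7).le, mul_nonneg ha (pow_pos hx 8).le,
      mul_nonneg (mul_nonneg ha ha) (pow_pos hx 7).le,
      mul_nonneg (mul_nonneg ha ha) hx.le, mul_nonneg (mul_nonneg ha ha) ha, sq_nonneg x]
  have hc1 : (0:ℝ) ≤ (1.7725 - s) * x := mul_nonneg (by linarith) hx.le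
  have hc2 : (0:ℝ) ≤ (s - 1.7724) * (s + 1.7724) * (x^2*(1+x^2)) := by
    apply mul_nonneg (mul_nonneg (by linarith) (by linarith)); positivity
  have hc3 : (0:ℝ) ≤ (3.545 - 2*s) * (x^2*(1+x^2)*(x - x^3/3 + x^5/10)) := by
    apply mul_nonneg (by linarith)
    apply mul_nonneg (by positivity) hq
  nlinarith [hG, hc1, hc2, hc3]

/-- For all `x > 0`, `1 − √π·x·H(x) ≤ min{1/(2x²), 1/(√π·x)}`. -/
theorem one_sub_millsRatio_bound (x : ℝ) (hx : 0 < x) :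
    1 - Real.sqrt π * x * MillsRatio x ≤
      min (1 / (2 * x ^ 2)) (1 / (Real.sqrt π * x)) := by
  obtain ⟨hs1, hs2⟩ := sqrt_pi_bounds
  have hspos : 0 < Real.sqrt π := by linarith
  set s := Real.sqrt π with hs
  set I := ∫ r in Set.Ioi x, Real.exp (-r ^ 2) with hI
  have hprod : s * x * MillsRatio x = 2 * x * Real.exp (x ^ 2) * I := by
    simp only [MillsRatio, erfc, ← hI]
    field_simp
    ring
  have hexp1 : Real.exp (x ^ 2) * Real.exp (-x ^ 2) = 1 := by
    rw [← Real.exp_add]; simp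
  have hA : 1 - s * x * MillsRatio x ≤ 1 / (2 * x ^ 2) := by
    have hlow := gauss_int_lower x hx
    rw [hprod]
    have h1 : 2 * x * Real.exp (x ^ 2) * (Real.exp (-x ^ 2) * (2 * x ^ 2 - 1) / (4 * x ^ 3))
        ≤ 2 * x * Real.exp (x ^ 2) * I :=
      mul_le_mul_of_nonneg_left hlow (by positivity)
    have h2 : 2 * x * Real.exp (x ^ 2) * (Real.exp (-x ^ 2) * (2 * x ^ 2 - 1) / (4 * x ^ 3))
        = (2 * x ^ 2 - 1) / (2 * x ^ 2) := by
      field_simp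
      linear_combination (8 * x ^ 2 - 4) * hexp1
    have h3 : (2 * x ^ 2 - 1) / (2 * x ^ 2) = 1 - 1 / (2 * x ^ 2) := by
      field_simp
    rw [h2, h3] at h1
    linarith
  rcases le_or_gt ((9:ℝ)/10) x with hcase | hcase
  · -- large x : both follow from hA
    apply le_min hA
    apply hA.trans
    rw [div_le_div_iff₀ (by positivity) (by positivity)]
    nlinarith [mul_pos hx hx]
  · -- small x
    apply le_min hA
    have hlow := gauss_int_lower_small x hx
    rw [← hs] at hlow
    rw [hprod]
    have hexp2 : 1 + x ^ 2 ≤ Real.exp (x ^ 2) := by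
      linarith [Real.add_one_le_exp (x ^ 2)]
    have ha : (0:ℝ) ≤ 9/10 - x := by linarith
    have hq34 : x - x ^ 3 / 3 + x ^ 5 / 10 ≤ 3 / 4 := by
      nlinarith [mul_nonneg ha hx.le, mul_nonneg (mul_nonneg ha hx.le) hx.le,
        mul_nonneg (mul_nonneg (mul_nonneg ha hx.le) hx.le) hx.le,
        mul_nonneg (mul_nonneg (mul_nonneg (mul_nonneg ha hx.le) hx.le) hx.le) hx.le,
        mul_nonneg ha ha, sq_nonneg x]
    have hp : (0:ℝ) ≤ s / 2 - (x - x ^ 3 / 3 + x ^ 5 / 10) := by linarith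
    have h1 : 2 * x * (1 + x ^ 2) * (s / 2 - (x - x ^ 3 / 3 + x ^ 5 / 10))
        ≤ 2 * x * Real.exp (x ^ 2) * I := by
      calc 2 * x * (1 + x ^ 2) * (s / 2 - (x - x ^ 3 / 3 + x ^ 5 / 10))
          ≤ 2 * x * Real.exp (x ^ 2) * (s / 2 - (x - x ^ 3 / 3 + x ^ 5 / 10)) := by
            apply mul_le_mul_of_nonneg_right _ hp
            have h2x : (0:ℝ) ≤ 2 * x := by positivity
            nlinarith [hexp2]
        _ ≤ 2 * x * Real.exp (x ^ 2) * I :=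
            mul_le_mul_of_nonneg_left hlow (by positivity)
    have hsx : (0:ℝ) < s * x := by positivity
    have key := aux_key x s hx hcase hs1 hs2
    calc 1 - 2 * x * Real.exp (x ^ 2) * I
        ≤ 1 - 2 * x * (1 + x ^ 2) * (s / 2 - (x - x ^ 3 / 3 + x ^ 5 / 10)) := by linarith
      _ ≤ 1 / (s * x) := by rw [le_div_iff₀ hsx]; exact key
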